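/- arXiv:2210.11079 — 2 statements merged into one kernel-verified Lean document; each statement's English description precedes it below -/
import Mathlib

section
/- Suppose a sequence of sequential tests satisfies E_0[T_n] ≤ n, the binary data-processing bound α_n log(α_n/(1-β_n)) + (1-α_n) log((1-α_n)/β_n) ≤ E_0[S_{T_n}], the optional-stopping bound E_0[S_{T_n}] ≤ D · E_0[T_n] for a constant D > 0, and α_n → 0. Then limsup_{n→∞} (1/n) log(1/β_n) ≤ D. -/
open Filter Real

/-- Algebraic core of the converse under the expectation constraint:
if `E₀[Tₙ] ≤ n`, the binary data-processing bound holds, the optional-stopping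
bound `E₀[S_{Tₙ}] ≤ D·E₀[Tₙ]` holds for `D > 0`, and `αₙ → 0`, then
`limsup (1/n)·log(1/βₙ) ≤ D`. Here `ET n` models `E₀[Tₙ]` and `ES n` models
`E₀[S_{Tₙ}]`. -/
theorem stmt5 (α β ET ES : ℕ → ℝ) (D : ℝ) (hD : 0 < D)
    (hα : ∀ n, α n ∈ Set.Ioo (0:ℝ) 1) (hβ : ∀ n, β n ∈ Set.Ioo (0:ℝ) 1)
    (hT : ∀ n, ET n ≤ n)
    (hdpi : ∀ n, α n * Real.log (α n / (1 - β n))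
        + (1 - α n) * Real.log ((1 - α n) / β n) ≤ ES n)
    (host : ∀ n, ES n ≤ D * ET n)
    (hα0 : Tendsto α atTop (nhds 0)) :
    Filter.limsup (fun n : ℕ => (1 / (n : ℝ)) * Real.log (1 / β n)) atTop ≤ D := by
  set c : ℕ → ℝ := fun n => -(α n * Real.log (α n)) - (1 - α n) * Real.log (1 - α n)
    with hc
  set g : ℕ → ℝ := fun n => D / (1 - α n) + c n * (1 / (1 - α n) * (1 / (n : ℝ))) with hg
  -- limits
  have h1α : Tendsto (fun n => 1 - α n) atTop (nhds 1) := by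
    have := hα0.const_sub 1
    simpa [one_div] using this
  have hc0 : Tendsto c atTop (nhds 0) := by
    have h1 : Tendsto (fun n => α n * Real.log (α n)) atTop (nhds 0) := by
      have := (Real.continuous_mul_log.tendsto 0).comp hα0
      simpa [one_div, Function.comp_def] using this
    have h2 : Tendsto (fun n => (1 - α n) * Real.log (1 - α n)) atTop (nhds 0) := by
      have := (Real.continuous_mul_log.tendsto 1).comp h1α
      simpa [one_div, Function.comp_def] using this
    have := (h1.neg.sub h2)
    simpa [one_div] using this
  have hgD : Tendsto g atTop (nhds D) := by
    have ht1 : Tendsto (fun n => D / (1 - α n)) atTop (nhds (D / 1)) :=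
      tendsto_const_nhds.div h1α one_ne_zero
    have ht2 : Tendsto (fun n => c n * (1 / (1 - α n) * (1 / (n : ℝ)))) atTop (nhds (0 * (1/1 * 0))) := by
      refine hc0.mul (Tendsto.mul ?_ tendsto_one_div_atTop_nhds_zero_nat)
      exact tendsto_const_nhds.div h1α one_ne_zero
    have := ht1.add ht2
    rw [hg]
    simpa using this
  -- eventual bound
  have hbound : ∀ᶠ n : ℕ in atTop, (1 / (n : ℝ)) * Real.log (1 / β n) ≤ g n := by
    filter_upwards [eventually_ge_atTop 1] with n hn
    obtain ⟨ha0, ha1⟩ := hα n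
    obtain ⟨hb0, hb1⟩ := hβ n
    have hn0 : (0:ℝ) < (n : ℝ) := by exact_mod_cast hn
    have h1a : 0 < 1 - α n := by linarith
    have h1b : 0 < 1 - β n := by linarith
    -- chain of inequalities
    have key : α n * Real.log (α n / (1 - β n))
        + (1 - α n) * Real.log ((1 - α n) / β n) ≤ D * n :=
      le_trans (hdpi n) (le_trans (host n) (by nlinarith [hT n]))
    rw [Real.log_div (ne_of_gt ha0) (ne_of_gt h1b),
        Real.log_div (ne_of_gt h1a) (ne_of_gt hb0)] at key
    have hlog1b : Real.log (1 - β n) ≤ 0 := Real.log_nonpos (by linarith) (by linarith)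
    have hstep : (1 - α n) * (- Real.log (β n)) ≤ D * n + c n := by
      have : 0 ≤ α n * (- Real.log (1 - β n)) := by nlinarith
      simp only [hc]
      nlinarith
    have hlogβ : Real.log (1 / β n) = - Real.log (β n) := by
      rw [one_div, Real.log_inv]
    rw [hlogβ, hg]
    dsimp only
    rw [div_add' _ _ _ (ne_of_gt h1a)]
    have hrw : D / (1 - α n) + c n * (1 / (1 - α n) * (1 / (n : ℝ)))
        = (D * n + c n) / ((1 - α n) * n) := by
      field_simp
    have hfin : 1 / (n:ℝ) * (- Real.log (β n)) ≤ (D * n + c n) / ((1 - α n) * n) := by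
      rw [show 1 / (n:ℝ) * (- Real.log (β n)) = (- Real.log (β n)) / n by ring,
        div_le_div_iff₀ hn0 (by positivity)]
      nlinarith
    calc 1 / (n:ℝ) * (- Real.log (β n)) ≤ (D * n + c n) / ((1 - α n) * n) := hfin
      _ = _ := by rw [← hrw]; rw [div_add' _ _ _ (ne_of_gt h1a)]
  -- conclude
  have hnonneg : ∀ᶠ n : ℕ in atTop, (0:ℝ) ≤ (1 / (n : ℝ)) * Real.log (1 / β n) := by
    filter_upwards [eventually_ge_atTop 1] with n hn
    have hn0 : (0:ℝ) < (n : ℝ) := by exact_mod_cast hn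
    have : 0 ≤ Real.log (1 / β n) := by
      apply Real.log_nonneg
      rw [le_div_iff₀ (hβ n).1]
      linarith [(hβ n).2]
    positivity
  have hcb : IsCoboundedUnder (· ≤ ·) atTop (fun n : ℕ => (1 / (n : ℝ)) * Real.log (1 / β n)) :=
    isCoboundedUnder_le_of_eventually_le atTop hnonneg
  have hbd : IsBoundedUnder (· ≤ ·) atTop g := hgD.isBoundedUnder_le
  calc Filter.limsup (fun n : ℕ => (1 / (n : ℝ)) * Real.log (1 / β n)) atTop
      ≤ Filter.limsup g atTop := limsup_le_limsup hbound hcb hbd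
    _ = D := hgD.limsup_eq
end

section
/- For i.i.d. classical samples with per-sample relative entropy D = D(P_0∥P_1) > 0 and bounded log-likelihood ratios, the SPRT with thresholds A_n = n(D' - τ) and B_n = n(D - τ) (where D' = D(P_1∥P_0), 0 < τ < min(D, D')) satisfies: E_0[T_n] < n and E_1[T_n] < n for all sufficiently large n, while α_n ≤ e^{-A_n} and β_n ≤ e^{-B_n}. Hence the exponent pair (D(P_1∥P_0) - τ, D(P_0∥P_1) - τ) is achievable under the expectation constraint for every τ > 0. -/
open MeasureTheory ProbabilityTheory Real
open scoped ENNReal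

lemma cylMeas {𝒳 : Type*} [Fintype 𝒳] [MeasurableSpace 𝒳] [MeasurableSingletonClass 𝒳]
    {Ω : Type*} [MeasurableSpace Ω] (μ : Measure Ω) [IsProbabilityMeasure μ]
    (p : 𝒳 → ℝ) (hp : ∀ a, 0 < p a)
    (X : ℕ → Ω → 𝒳)
    (hind : iIndepFun X μ)
    (hmarg : ∀ j a, (μ (X j ⁻¹' {a})).toReal = p a)
    (k : ℕ) (w : Fin k → 𝒳) :
    μ {ω | ∀ j : Fin k, X ((j : ℕ) + 1) ω = w j}
      = ENNReal.ofReal (∏ j : Fin k, p (w j)) := by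
  classical
  set sets : ℕ → Set 𝒳 := fun i => ⋂ (j : Fin k) (_ : (j : ℕ) + 1 = i), {w j} with hsets
  have hsetsm : ∀ i, MeasurableSet (sets i) := fun i => (Set.to_countable _).measurableSet
  have hset : {ω | ∀ j : Fin k, X ((j : ℕ) + 1) ω = w j}
      = ⋂ i ∈ (Finset.range k).map ⟨Nat.succ, Nat.succ_injective⟩, X i ⁻¹' sets i := by
    ext ω
    simp only [Set.mem_setOf_eq, Set.mem_iInter, Finset.mem_map, Finset.mem_range,
      Function.Embedding.coeFn_mk, hsets, Set.mem_preimage, Set.mem_singleton_iff]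
    constructor
    · rintro h i ⟨l, hl, rfl⟩ j hj
      have hj' : j = (⟨l, hl⟩ : Fin k) := by
        apply Fin.ext; simpa [Nat.succ_eq_add_one] using hj
      subst hj'; simpa [Nat.succ_eq_add_one] using h (⟨l, hl⟩ : Fin k)
    · intro h j
      exact h ((j : ℕ) + 1) ⟨j, j.2, rfl⟩ j rfl
  -- the ℕ-indexed factor function
  set f : ℕ → ℝ := fun l => if h : l < k then p (w ⟨l, h⟩) else 1 with hf
  have hprod : ∏ j : Fin k, p (w j) = ∏ l ∈ Finset.range k, f l := by
    rw [← Fin.prod_univ_eq_prod_range]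
    exact Finset.prod_congr rfl fun j _ => by simp [hf, j.2]
  rw [hset, hind.measure_inter_preimage_eq_mul _ (fun i _ => hsetsm i), Finset.prod_map,
    hprod, ENNReal.ofReal_prod_of_nonneg (fun l _ => by
      by_cases h : l < k <;> simp [hf, h, (hp _).le, zero_le_one])]
  refine Finset.prod_congr rfl fun l hl => ?_
  rcases Finset.mem_range.1 hl with hlk
  have hsets' : sets (Nat.succ l) = {w ⟨l, hlk⟩} := by
    ext x
    simp only [hsets, Set.mem_iInter, Set.mem_singleton_iff]
    constructor
    · intro h; exact h ⟨l, hlk⟩ rfl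
    · intro h j hj
      have : j = (⟨l, hlk⟩ : Fin k) := by apply Fin.ext; simpa [Nat.succ_eq_add_one] using hj
      subst this; exact h
  have : f l = p (w ⟨l, hlk⟩) := by simp [hf, hlk]
  rw [Function.Embedding.coeFn_mk, hsets', this, ← hmarg (Nat.succ l) (w ⟨l, hlk⟩),
    ENNReal.ofReal_toReal (measure_ne_top _ _)]

lemma lintNat {Ω : Type*} [MeasurableSpace Ω] (μ : Measure Ω)
    (f : Ω → ℕ) (hf : Measurable f) :
    ∫⁻ ω, (f ω : ℝ≥0∞) ∂μ = ∑' k : ℕ, μ {ω | k < f ω} := by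
  have hpt : ∀ ω, (f ω : ℝ≥0∞)
      = ∑' k : ℕ, Set.indicator {ω' | k < f ω'} (fun _ => (1 : ℝ≥0∞)) ω := by
    intro ω
    have h1 : ∀ k : ℕ, Set.indicator {ω' | k < f ω'} (fun _ => (1 : ℝ≥0∞)) ω
        = if k < f ω then 1 else 0 := fun k => by
      by_cases h : k < f ω <;> simp [Set.indicator_apply, Set.mem_setOf_eq, h]
    simp_rw [h1]
    rw [tsum_eq_sum (s := Finset.range (f ω)) (fun k hk => if_neg (by simpa using hk))]
    rw [Finset.sum_ite_of_true (fun k hk => Finset.mem_range.1 hk)]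
    simp
  calc ∫⁻ ω, (f ω : ℝ≥0∞) ∂μ
      = ∫⁻ ω, ∑' k : ℕ, Set.indicator {ω' | k < f ω'} (fun _ => (1 : ℝ≥0∞)) ω ∂μ := by
        exact lintegral_congr hpt
    _ = ∑' k : ℕ, ∫⁻ ω, Set.indicator {ω' | k < f ω'} (fun _ => (1 : ℝ≥0∞)) ω ∂μ := by
        refine lintegral_tsum fun k => ?_
        exact (measurable_const.indicator (hf measurableSet_Ioi)).aemeasurable
    _ = ∑' k : ℕ, μ {ω | k < f ω} := by
        refine tsum_congr fun k => ?_
        have hms : MeasurableSet {ω | k < f ω} := hf measurableSet_Ioi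
        rw [lintegral_indicator_const hms, one_mul]

lemma TmeasAux {Ω : Type*} [MeasurableSpace Ω] (S : ℕ → Ω → ℝ)
    (hSmeas : ∀ k, Measurable (S k)) (A B : ℝ) :
    Measurable (fun ω => sInf {k : ℕ | 1 ≤ k ∧ (S k ω ≤ -A ∨ B ≤ S k ω)}) := by
  set c : ℕ → Ω → Prop := fun k ω => 1 ≤ k ∧ (S k ω ≤ -A ∨ B ≤ S k ω) with hc
  have hcmeas : ∀ k, MeasurableSet {ω | c k ω} := by
    intro k
    by_cases h1 : 1 ≤ k
    · have : {ω | c k ω} = {ω | S k ω ≤ -A} ∪ {ω | B ≤ S k ω} := by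
        ext ω; simp [hc, h1]
      rw [this]
      exact ((hSmeas k) measurableSet_Iic).union ((hSmeas k) measurableSet_Ici)
    · have : {ω | c k ω} = ∅ := by ext ω; simp [hc, h1]
      simp [this]
  apply measurable_to_countable'
  intro y
  match y with
  | 0 =>
    have : (fun ω => sInf {k : ℕ | c k ω}) ⁻¹' {0} = ⋂ m, {ω | c m ω}ᶜ := by
      ext ω
      simp only [Set.mem_preimage, Set.mem_singleton_iff, Set.mem_iInter, Set.mem_compl_iff,
        Set.mem_setOf_eq]
      constructor
      · intro h0 m hm
        have hne : {k : ℕ | c k ω}.Nonempty := ⟨m, hm⟩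
        have := Nat.sInf_mem hne
        rw [h0] at this
        exact absurd this.1 (by norm_num)
      · intro h
        have : {k : ℕ | c k ω} = ∅ := by
          ext m; simp only [Set.mem_setOf_eq, Set.mem_empty_iff_false, iff_false]; exact h m
        rw [this, Nat.sInf_empty]
    rw [this]
    exact MeasurableSet.iInter fun m => (hcmeas m).compl
  | (m+1) =>
    have : (fun ω => sInf {k : ℕ | c k ω}) ⁻¹' {m+1}
        = {ω | c (m+1) ω} ∩ ⋂ l ∈ Finset.range (m+1), {ω | c l ω}ᶜ := by
      ext ω
      simp only [Set.mem_preimage, Set.mem_singleton_iff, Set.mem_inter_iff, Set.mem_iInter,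
        Set.mem_compl_iff, Set.mem_setOf_eq, Finset.mem_range]
      constructor
      · intro h0
        have hne : {k : ℕ | c k ω}.Nonempty := by
          by_contra hemp
          rw [Set.not_nonempty_iff_eq_empty] at hemp
          rw [hemp, Nat.sInf_empty] at h0
          exact absurd h0 (by omega)
        have hmem := Nat.sInf_mem hne
        rw [h0] at hmem
        exact ⟨hmem, fun l hl => Nat.notMem_of_lt_sInf (by omega : l < sInf {k : ℕ | c k ω})⟩
      · rintro ⟨hmem, hmin⟩
        refine le_antisymm (Nat.sInf_le hmem) (le_of_not_gt fun h => ?_)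
        exact hmin _ h (Nat.sInf_mem (⟨m+1, hmem⟩ : {k : ℕ | c k ω}.Nonempty))
    rw [this]
    exact (hcmeas (m+1)).inter
      (MeasurableSet.biInter (Set.to_countable _) fun l _ => (hcmeas l).compl)

lemma errOne {𝒳 : Type*} [Fintype 𝒳] [MeasurableSpace 𝒳] [MeasurableSingletonClass 𝒳]
    {Ω : Type*} [MeasurableSpace Ω] (μ ν : Measure Ω)
    [IsProbabilityMeasure μ] [IsProbabilityMeasure ν]
    (p q : 𝒳 → ℝ) (hp : ∀ a, 0 < p a) (hq : ∀ a, 0 < q a)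
    (X : ℕ → Ω → 𝒳) (hXmeas : ∀ j, Measurable (X j))
    (hindμ : iIndepFun X μ)
    (hindν : iIndepFun X ν)
    (hmargμ : ∀ j a, (μ (X j ⁻¹' {a})).toReal = p a)
    (hmargν : ∀ j a, (ν (X j ⁻¹' {a})).toReal = q a)
    (S : ℕ → Ω → ℝ)
    (hS : ∀ k ω, S k ω = ∑ j ∈ Finset.range k, Real.log (p (X (j + 1) ω) / q (X (j + 1) ω)))
    (A B : ℝ) (hA : 0 < A)
    (T : Ω → ℕ)
    (hT : ∀ ω, T ω = sInf {k : ℕ | 1 ≤ k ∧ (S k ω ≤ -A ∨ B ≤ S k ω)}) :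
    (μ {ω | S (T ω) ω ≤ -A}).toReal ≤ Real.exp (-A) := by
  classical
  set L : 𝒳 → ℝ := fun a => Real.log (p a / q a) with hL
  have hpq : ∀ a, p a = Real.exp (L a) * q a := by
    intro a
    rw [hL, Real.exp_log (div_pos (hp a) (hq a)), div_mul_cancel₀ _ (hq a).ne']
  have hSmeas : ∀ k, Measurable (S k) := by
    intro k
    have : S k = fun ω => ∑ j ∈ Finset.range k, L (X (j + 1) ω) := by
      funext ω; rw [hS]
    rw [this]
    exact Finset.measurable_sum _ fun j _ =>
      (measurable_of_countable L).comp (hXmeas (j + 1))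
  set c : ℕ → Ω → Prop := fun k ω => 1 ≤ k ∧ (S k ω ≤ -A ∨ B ≤ S k ω) with hc
  have hcmeas : ∀ k, MeasurableSet {ω | c k ω} := by
    intro k
    by_cases h1 : 1 ≤ k
    · have : {ω | c k ω} = {ω | S k ω ≤ -A} ∪ {ω | B ≤ S k ω} := by
        ext ω; simp [hc, h1, Set.mem_setOf_eq]
      rw [this]
      exact ((hSmeas k) measurableSet_Iic).union ((hSmeas k) measurableSet_Ici)
    · have : {ω | c k ω} = ∅ := by
        ext ω; simp [hc, h1]
      simp [this]
  set E' : ℕ → Set Ω := fun k =>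
    {ω | c k ω ∧ (∀ m, m < k → ¬ c m ω) ∧ S k ω ≤ -A} with hE'
  have hE'meas : ∀ k, MeasurableSet (E' k) := by
    intro k
    have : E' k = {ω | c k ω} ∩ ((⋂ m ∈ Finset.range k, {ω | c m ω}ᶜ) ∩ {ω | S k ω ≤ -A}) := by
      ext ω
      simp only [hE', Set.mem_setOf_eq, Set.mem_inter_iff, Set.mem_iInter, Set.mem_compl_iff,
        Finset.mem_range]
      try tauto
    rw [this]
    exact (hcmeas k).inter ((MeasurableSet.biInter (Set.to_countable _)
      (fun m _ => (hcmeas m).compl)).inter ((hSmeas k) measurableSet_Iic))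
  have hEU : {ω | S (T ω) ω ≤ -A} = ⋃ k, E' k := by
    ext ω
    simp only [Set.mem_setOf_eq, Set.mem_iUnion]
    constructor
    · intro hE
      have hne : {k : ℕ | c k ω}.Nonempty := by
        by_contra hemp
        rw [Set.not_nonempty_iff_eq_empty] at hemp
        have hT0 : T ω = 0 := by
          rw [hT]
          have : {k : ℕ | 1 ≤ k ∧ (S k ω ≤ -A ∨ B ≤ S k ω)} = (∅ : Set ℕ) := hemp
          rw [this, Nat.sInf_empty]
        rw [hT0] at hE
        have : S 0 ω = 0 := by rw [hS]; simp
        rw [this] at hE; linarith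
      refine ⟨T ω, ?_, ?_, hE⟩
      · have := Nat.sInf_mem hne
        rwa [hT]
      · intro m hm
        have hm' : m < sInf {k : ℕ | 1 ≤ k ∧ (S k ω ≤ -A ∨ B ≤ S k ω)} := by rwa [hT] at hm
        exact fun hcm => Nat.notMem_of_lt_sInf hm' hcm
    · rintro ⟨k, hck, hmin, hSk⟩
      have hTk : T ω = k := by
        rw [hT]
        refine le_antisymm (Nat.sInf_le hck) (le_of_not_gt fun h => ?_)
        exact hmin _ h (Nat.sInf_mem (⟨k, hck⟩ :
          {k : ℕ | 1 ≤ k ∧ (S k ω ≤ -A ∨ B ≤ S k ω)}.Nonempty))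
      rwa [hTk]
  have hdisj : Pairwise (Function.onFun Disjoint E') := by
    intro k l hkl
    rcases hkl.lt_or_gt with h | h
    · exact Set.disjoint_left.2 fun ω hk hl => hl.2.1 k h hk.1
    · exact Set.disjoint_left.2 fun ω hk hl => hk.2.1 l h hl.1
  -- pointwise bound per index k
  have hkey : ∀ k, μ (E' k) ≤ ENNReal.ofReal (Real.exp (-A)) * ν (E' k) := by
    intro k
    set Cyl : (Fin k → 𝒳) → Set Ω := fun w => {ω | ∀ j : Fin k, X ((j : ℕ) + 1) ω = w j} with hCyl
    have hCylmeas : ∀ w, MeasurableSet (Cyl w) := by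
      intro w
      have : Cyl w = ⋂ j : Fin k, X ((j : ℕ) + 1) ⁻¹' {w j} := by
        ext ω; simp [hCyl]
      rw [this]
      exact MeasurableSet.iInter fun j => (hXmeas _) (measurableSet_singleton _)
    have hcover : E' k = ⋃ w ∈ (Finset.univ : Finset (Fin k → 𝒳)), E' k ∩ Cyl w := by
      ext ω
      simp only [Set.mem_iUnion, Finset.mem_univ, Set.mem_inter_iff, exists_prop, true_and]
      refine ⟨fun h => ⟨fun j => X ((j : ℕ) + 1) ω, h, fun j => rfl⟩, fun ⟨w, h, _⟩ => h⟩
    have hpiece : ∀ w : Fin k → 𝒳,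
        μ (E' k ∩ Cyl w) ≤ ENNReal.ofReal (Real.exp (-A)) * ν (E' k ∩ Cyl w) := by
      intro w
      rcases Set.eq_empty_or_nonempty (E' k ∩ Cyl w) with hemp | ⟨ω₀, hω₀E, hω₀C⟩
      · simp [hemp]
      have hconst : E' k ∩ Cyl w = Cyl w := by
        refine Set.Subset.antisymm Set.inter_subset_right fun ω hω => ⟨?_, hω⟩
        have hSeq : ∀ m, m ≤ k → S m ω = S m ω₀ := by
          intro m hm
          rw [hS, hS]
          refine Finset.sum_congr rfl fun j hj => ?_
          have hjk : j < k := lt_of_lt_of_le (Finset.mem_range.1 hj) hm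
          have h1 : X (j + 1) ω = w ⟨j, hjk⟩ := hω ⟨j, hjk⟩
          have h2 : X (j + 1) ω₀ = w ⟨j, hjk⟩ := hω₀C ⟨j, hjk⟩
          rw [h1, h2]
        have hceq : ∀ m, m ≤ k → (c m ω ↔ c m ω₀) := by
          intro m hm; rw [hc]; simp only [hSeq m hm]
        obtain ⟨hck, hmin, hSk⟩ := hω₀E
        exact ⟨(hceq k le_rfl).2 hck,
          fun m hm hcm => hmin m hm ((hceq m hm.le).1 hcm),
          (hSeq k le_rfl).symm ▸ hSk⟩
      have hsum : S k ω₀ = ∑ j : Fin k, L (w j) := by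
        rw [hS, ← Fin.sum_univ_eq_sum_range
          (fun j => Real.log (p (X (j + 1) ω₀) / q (X (j + 1) ω₀))) k]
        exact Finset.sum_congr rfl fun j _ => by rw [hω₀C j]
      rw [hconst]
      have hμe : μ (Cyl w) = ENNReal.ofReal (∏ j : Fin k, p (w j)) :=
        cylMeas μ p hp X hindμ hmargμ k w
      have hνe : ν (Cyl w) = ENNReal.ofReal (∏ j : Fin k, q (w j)) :=
        cylMeas ν q hq X hindν hmargν k w
      have hSA : S k ω₀ ≤ -A := hω₀E.2.2
      have hprodle : ∏ j : Fin k, p (w j) ≤ Real.exp (-A) * ∏ j : Fin k, q (w j) := by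
        have h1 : ∏ j : Fin k, p (w j) = Real.exp (S k ω₀) * ∏ j : Fin k, q (w j) := by
          rw [hsum]
          calc ∏ j : Fin k, p (w j)
              = ∏ j : Fin k, (Real.exp (L (w j)) * q (w j)) :=
                Finset.prod_congr rfl fun j _ => hpq (w j)
            _ = (∏ j : Fin k, Real.exp (L (w j))) * ∏ j : Fin k, q (w j) :=
                Finset.prod_mul_distrib
            _ = Real.exp (∑ j : Fin k, L (w j)) * ∏ j : Fin k, q (w j) := by
                rw [Real.exp_sum]
        rw [h1]
        exact mul_le_mul_of_nonneg_right (Real.exp_le_exp.2 hSA)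
          (Finset.prod_nonneg fun j _ => (hq _).le)
      rw [hμe, hνe, ← ENNReal.ofReal_mul (Real.exp_pos _).le]
      exact ENNReal.ofReal_le_ofReal hprodle
    calc μ (E' k) = ∑ w : Fin k → 𝒳, μ (E' k ∩ Cyl w) := by
          conv_lhs => rw [hcover]
          exact measure_biUnion_finset
            (fun w _ w' _ hww' => Set.disjoint_left.2 fun ω hw hw' => hww' (by
              funext j
              rw [← hw.2 j, ← hw'.2 j]))
            (fun w _ => (hE'meas k).inter (hCylmeas w))
      _ ≤ ∑ w : Fin k → 𝒳, ENNReal.ofReal (Real.exp (-A)) * ν (E' k ∩ Cyl w) :=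
          Finset.sum_le_sum fun w _ => hpiece w
      _ = ENNReal.ofReal (Real.exp (-A)) * ∑ w : Fin k → 𝒳, ν (E' k ∩ Cyl w) := by
          rw [Finset.mul_sum]
      _ = ENNReal.ofReal (Real.exp (-A)) * ν (E' k) := by
          congr 1
          conv_rhs => rw [hcover]
          exact (measure_biUnion_finset
            (fun w _ w' _ hww' => Set.disjoint_left.2 fun ω hw hw' => hww' (by
              funext j
              rw [← hw.2 j, ← hw'.2 j]))
            (fun w _ => (hE'meas k).inter (hCylmeas w))).symm
  have htotal : μ {ω | S (T ω) ω ≤ -A} ≤ ENNReal.ofReal (Real.exp (-A)) := by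
    calc μ {ω | S (T ω) ω ≤ -A} = ∑' k, μ (E' k) := by
          rw [hEU, measure_iUnion hdisj hE'meas]
      _ ≤ ∑' k, ENNReal.ofReal (Real.exp (-A)) * ν (E' k) := ENNReal.tsum_le_tsum hkey
      _ = ENNReal.ofReal (Real.exp (-A)) * ∑' k, ν (E' k) := ENNReal.tsum_mul_left
      _ = ENNReal.ofReal (Real.exp (-A)) * ν (⋃ k, E' k) := by
          rw [measure_iUnion hdisj hE'meas]
      _ ≤ ENNReal.ofReal (Real.exp (-A)) * 1 := by
          exact mul_le_mul_right prob_le_one _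
      _ = ENNReal.ofReal (Real.exp (-A)) := mul_one _
  exact ENNReal.toReal_le_of_le_ofReal (Real.exp_pos _).le htotal

lemma intX {𝒳 : Type*} [Fintype 𝒳] [MeasurableSpace 𝒳] [MeasurableSingletonClass 𝒳]
    {Ω : Type*} [MeasurableSpace Ω] (μ : Measure Ω) [IsProbabilityMeasure μ]
    (p : 𝒳 → ℝ) (X : Ω → 𝒳) (hX : Measurable X)
    (hmarg : ∀ a, (μ (X ⁻¹' {a})).toReal = p a) (g : 𝒳 → ℝ) :
    ∫ ω, g (X ω) ∂μ = ∑ a, p a * g a := by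
  have : IsProbabilityMeasure (μ.map X) := Measure.isProbabilityMeasure_map hX.aemeasurable
  rw [← integral_map hX.aemeasurable (measurable_of_countable g).aestronglyMeasurable,
    integral_fintype .of_finite]
  refine Finset.sum_congr rfl fun a _ => ?_
  rw [smul_eq_mul, measureReal_def, Measure.map_apply hX (measurableSet_singleton a), hmarg a]

set_option maxHeartbeats 1000000 in
set_option maxHeartbeats 1000000 in
lemma expOne {𝒳 : Type*} [Fintype 𝒳] [MeasurableSpace 𝒳] [MeasurableSingletonClass 𝒳]
    [Nonempty 𝒳]
    {Ω : Type*} [MeasurableSpace Ω] (μ : Measure Ω) [IsProbabilityMeasure μ]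
    (p : 𝒳 → ℝ) (hp : ∀ a, 0 < p a) (hpsum : ∑ a, p a = 1)
    (L : 𝒳 → ℝ) (d τ : ℝ) (hd : d = ∑ a, p a * L a) (hτ : 0 < τ) (hτd : τ < d)
    (X : ℕ → Ω → 𝒳) (hXmeas : ∀ j, Measurable (X j))
    (hind : iIndepFun X μ)
    (hmarg : ∀ j a, (μ (X j ⁻¹' {a})).toReal = p a)
    (V : ℕ → Ω → ℝ) (hV : ∀ k ω, V k ω = ∑ j ∈ Finset.range k, L (X (j + 1) ω))
    (T : ℕ → Ω → ℕ) (hTmeas : ∀ n, Measurable (T n))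
    (hTlt : ∀ n k ω, k < T n ω → V k ω ≤ (n : ℝ) * (d - τ)) :
    ∃ N : ℕ, ∀ n ≥ N, ∫ ω, (T n ω : ℝ) ∂μ < n := by
  classical
  -- constants
  set cL : ℝ := Finset.univ.sup' Finset.univ_nonempty (fun a => |L a|) with hcLdef
  have hcL : ∀ a, |L a| ≤ cL := fun a => by
    rw [hcLdef]; exact Finset.le_sup' (fun x => |L x|) (Finset.mem_univ a)
  have hcL0 : 0 ≤ cL := le_trans (abs_nonneg _) (hcL (Classical.arbitrary 𝒳))
  set M : ℝ := ∑ a, p a * (L a) ^ 2 with hMdef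
  have hM0 : 0 ≤ M := Finset.sum_nonneg fun a _ => mul_nonneg (hp a).le (sq_nonneg _)
  set u : ℝ := min (τ / (2 * (M + 1))) (1 / (cL + 1)) with hudef
  have hu : 0 < u := lt_min (by positivity) (by positivity)
  have hu2 : u ≤ τ / (2 * (M + 1)) := min_le_left _ _
  have hu3 : u ≤ 1 / (cL + 1) := min_le_right _ _
  have hu1 : ∀ a, |(-u) * L a| ≤ 1 := by
    intro a
    rw [abs_mul, abs_neg, abs_of_pos hu]
    have h1 : u * |L a| ≤ (1 / (cL + 1)) * cL := by
      apply mul_le_mul hu3 (hcL a) (abs_nonneg _) (by positivity)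
    have h2 : (1 / (cL + 1)) * cL ≤ 1 := by
      rw [div_mul_eq_mul_div, one_mul, div_le_one (by positivity)]
      linarith
    linarith
  -- the quadratic exponential bound
  have hexpq : ∀ x : ℝ, |x| ≤ 1 → Real.exp x ≤ 1 + x + x ^ 2 := by
    intro x hx
    have h := Real.exp_bound hx (n := 2) (by norm_num)
    have hsum2 : ∑ m ∈ Finset.range 2, x ^ m / m.factorial = 1 + x := by
      simp [Finset.sum_range_succ]
    rw [hsum2] at h
    norm_num at h
    have habs := (abs_le.1 h).2
    nlinarith [sq_abs x, sq_nonneg x]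
  set b : ℝ := d - τ / 2 with hbdef
  have hb : 0 < b := by simp only [hbdef]; linarith
  have ha : 0 < d - τ := by linarith
  have hab : d - τ < b := by simp only [hbdef]; linarith
  -- per-sample mgf bound
  set φ : ℝ := ∑ a, p a * Real.exp ((-u) * L a) with hφdef
  have hφ0 : 0 ≤ φ :=
    Finset.sum_nonneg fun a _ => mul_nonneg (hp a).le (Real.exp_pos _).le
  have hφ : φ ≤ Real.exp ((-u) * b) := by
    have h1 : φ ≤ ∑ a, p a * (1 + (-u) * L a + ((-u) * L a) ^ 2) := by
      refine Finset.sum_le_sum fun a _ => ?_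
      exact mul_le_mul_of_nonneg_left (hexpq _ (hu1 a)) (hp a).le
    have h2 : ∑ a, p a * (1 + (-u) * L a + ((-u) * L a) ^ 2)
        = 1 + (-u) * d + u ^ 2 * M := by
      have hterm : ∀ a, p a * (1 + (-u) * L a + ((-u) * L a) ^ 2)
          = p a + (-u) * (p a * L a) + u ^ 2 * (p a * (L a) ^ 2) := fun a => by ring
      rw [Finset.sum_congr rfl fun a _ => hterm a, Finset.sum_add_distrib,
        Finset.sum_add_distrib, ← Finset.mul_sum, ← Finset.mul_sum, hpsum, ← hd, hMdef]
    have h3 : u ^ 2 * M ≤ u * (τ / 2) := by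
      have hstep : u * M ≤ τ / 2 := by
        have : u * M ≤ (τ / (2 * (M + 1))) * M :=
          mul_le_mul_of_nonneg_right hu2 hM0
        have h4 : (τ / (2 * (M + 1))) * M ≤ τ / 2 := by
          rw [div_mul_eq_mul_div, div_le_div_iff₀ (by positivity) (by norm_num)]
          nlinarith
        linarith
      calc u ^ 2 * M = u * (u * M) := by ring
        _ ≤ u * (τ / 2) := mul_le_mul_of_nonneg_left hstep hu.le
    have h5 : 1 + (-u) * b ≤ Real.exp ((-u) * b) := by
      linarith [Real.add_one_le_exp ((-u) * b)]
    have h6 : 1 + (-u) * d + u ^ 2 * M ≤ 1 + (-u) * b := by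
      simp only [hbdef]; nlinarith
    linarith
  -- iid structure
  have hWmeas : ∀ i, Measurable (L ∘ X i) :=
    fun i => (measurable_of_countable L).comp (hXmeas i)
  have hiid : iIndepFun (fun i => L ∘ X i) μ :=
    hind.comp (fun _ => L) (fun _ => measurable_of_countable L)
  have hVmeas : ∀ k, Measurable (V k) := by
    intro k
    have : V k = fun ω => ∑ j ∈ Finset.range k, L (X (j + 1) ω) := funext fun ω => hV k ω
    rw [this]
    exact Finset.measurable_sum _ fun j _ => (measurable_of_countable L).comp (hXmeas (j + 1))
  have hVabs : ∀ k ω, |V k ω| ≤ (k : ℝ) * cL := by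
    intro k ω
    rw [hV]
    calc |∑ j ∈ Finset.range k, L (X (j + 1) ω)|
        ≤ ∑ j ∈ Finset.range k, |L (X (j + 1) ω)| := Finset.abs_sum_le_sum_abs _ _
      _ ≤ ∑ _j ∈ Finset.range k, cL := Finset.sum_le_sum fun j _ => hcL _
      _ = (k : ℝ) * cL := by rw [Finset.sum_const, Finset.card_range, nsmul_eq_mul]
  have hmgfW : ∀ i, mgf (L ∘ X i) μ (-u) = φ := by
    intro i
    have h0 := intX μ p (X i) (hXmeas i) (hmarg i) (fun a => Real.exp ((-u) * L a))
    rw [mgf, hφdef]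
    exact h0
  have hmgfV : ∀ k, mgf (V k) μ (-u) = φ ^ k := by
    intro k
    have hVsum : V k = ∑ i ∈ (Finset.range k).map ⟨Nat.succ, Nat.succ_injective⟩, (L ∘ X i) := by
      funext ω
      rw [Finset.sum_apply, Finset.sum_map, hV]
      rfl
    rw [hVsum, iIndepFun.mgf_sum hiid hWmeas _]
    rw [Finset.prod_congr rfl fun i _ => hmgfW i, Finset.prod_const, Finset.card_map,
      Finset.card_range]
  have hint : ∀ k, Integrable (fun ω => Real.exp ((-u) * V k ω)) μ := by
    intro k
    refine Integrable.mono' (integrable_const (Real.exp (u * ((k : ℝ) * cL))))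
      (((hVmeas k).const_mul (-u)).exp.aestronglyMeasurable) (ae_of_all _ fun ω => ?_)
    rw [Real.norm_eq_abs, abs_of_pos (Real.exp_pos _), Real.exp_le_exp]
    have := (abs_le.1 (hVabs k ω)).1
    nlinarith [hu.le]
  -- Chernoff bound
  have hcher : ∀ n k : ℕ, (μ {ω | V k ω ≤ (n : ℝ) * (d - τ)}).toReal
      ≤ Real.exp (u * ((n : ℝ) * (d - τ)) - u * k * b) := by
    intro n k
    have h := measure_le_le_exp_mul_mgf (μ := μ) (X := V k) ((n : ℝ) * (d - τ))
      (neg_nonpos.2 hu.le) (hint k)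
    rw [hmgfV k] at h
    refine h.trans ?_
    have hφk : φ ^ k ≤ Real.exp ((-u) * b) ^ k := pow_le_pow_left₀ hφ0 hφ k
    calc Real.exp (-(-u) * ((n : ℝ) * (d - τ))) * φ ^ k
        ≤ Real.exp (-(-u) * ((n : ℝ) * (d - τ))) * Real.exp ((-u) * b) ^ k :=
          mul_le_mul_of_nonneg_left hφk (Real.exp_pos _).le
      _ = Real.exp (u * ((n : ℝ) * (d - τ)) - u * k * b) := by
          rw [← Real.exp_nat_mul, ← Real.exp_add]
          congr 1
          ring
  -- geometric constants
  set r : ℝ := Real.exp (-(u * b)) with hrdef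
  have hr0 : 0 < r := Real.exp_pos _
  have hr1 : r < 1 := by
    rw [hrdef, Real.exp_lt_one_iff]
    nlinarith
  set Cr : ℝ := (1 - r)⁻¹ with hCrdef
  have hCr0 : 0 ≤ Cr := by
    have h1r : 0 < 1 - r := by linarith
    rw [hCrdef]
    exact (inv_nonneg).2 h1r.le
  refine ⟨⌈(2 + Cr) * b / (b - (d - τ))⌉₊ + 1, fun n hn => ?_⟩
  set m : ℕ := ⌈((n : ℝ) * (d - τ)) / b⌉₊ + 1 with hmdef
  set g : ℕ → ℝ := fun k =>
    if k < m then 1 else Real.exp (u * ((n : ℝ) * (d - τ)) - u * k * b) with hgdef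
  have hg0 : ∀ k, 0 ≤ g k := by
    intro k
    by_cases hk : k < m <;> simp [hgdef, hk, (Real.exp_pos _).le, zero_le_one]
  have hgge : ∀ k, g (k + m) = Real.exp (u * ((n : ℝ) * (d - τ)) - u * m * b) * r ^ k := by
    intro k
    rw [hgdef]
    simp only [if_neg (by omega : ¬ k + m < m)]
    rw [hrdef, ← Real.exp_nat_mul, ← Real.exp_add]
    congr 1
    push_cast
    ring
  have hsum_tail : Summable (fun k => g (k + m)) := by
    rw [funext hgge]
    exact (summable_geometric_of_lt_one hr0.le hr1).mul_left _
  have hsum_g : Summable g := (summable_nat_add_iff m).1 hsum_tail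
  have hsum1 : ∑ k ∈ Finset.range m, g k = m := by
    have hone : ∀ k ∈ Finset.range m, g k = 1 := fun k hk => by
      simp [hgdef, Finset.mem_range.1 hk]
    rw [Finset.sum_congr rfl hone, Finset.sum_const, Finset.card_range, nsmul_eq_mul, mul_one]
  have hexp1 : Real.exp (u * ((n : ℝ) * (d - τ)) - u * m * b) ≤ 1 := by
    rw [Real.exp_le_one_iff]
    have hceil : ((n : ℝ) * (d - τ)) / b ≤ (⌈((n : ℝ) * (d - τ)) / b⌉₊ : ℝ) := Nat.le_ceil _
    have hmge : ((n : ℝ) * (d - τ)) / b ≤ (m : ℝ) := by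
      rw [hmdef]; push_cast; linarith
    have : (n : ℝ) * (d - τ) ≤ (m : ℝ) * b := by
      rw [div_le_iff₀ hb] at hmge; linarith
    nlinarith
  have hsum2 : ∑' k, g (k + m) ≤ Cr := by
    rw [funext hgge, tsum_mul_left, tsum_geometric_of_lt_one hr0.le hr1, ← hCrdef]
    calc Real.exp (u * ((n : ℝ) * (d - τ)) - u * m * b) * Cr ≤ 1 * Cr :=
          mul_le_mul_of_nonneg_right hexp1 hCr0
      _ = Cr := one_mul _
  have hgtotal : ∑' k, g k ≤ (m : ℝ) + Cr := by
    rw [← Summable.sum_add_tsum_nat_add m hsum_g, hsum1]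
    linarith
  -- measure bounds
  have hmub : ∀ k, μ {ω | k < T n ω} ≤ ENNReal.ofReal (g k) := by
    intro k
    by_cases hk : k < m
    · rw [hgdef]
      simp only [if_pos hk]
      rw [ENNReal.ofReal_one]
      exact prob_le_one
    · have hsub : {ω | k < T n ω} ⊆ {ω | V k ω ≤ (n : ℝ) * (d - τ)} :=
        fun ω h => hTlt n k ω h
      refine (measure_mono hsub).trans ?_
      rw [← ENNReal.ofReal_toReal (measure_ne_top μ _)]
      apply ENNReal.ofReal_le_ofReal
      rw [hgdef]
      simp only [if_neg hk]
      exact hcher n k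
  have hTint : ∫ ω, (T n ω : ℝ) ∂μ = (∫⁻ ω, ((T n ω : ℕ) : ℝ≥0∞) ∂μ).toReal := by
    have h1 : ∫ ω, (T n ω : ℝ) ∂μ = ∫ ω, ((T n ω : ℕ) : ℝ≥0∞).toReal ∂μ :=
      integral_congr_ae (ae_of_all _ fun ω => by simp)
    rw [h1]
    exact integral_toReal (((measurable_of_countable (fun k : ℕ => (k : ℝ≥0∞))).comp
      (hTmeas n)).aemeasurable) (ae_of_all _ fun ω => ENNReal.natCast_lt_top _)
  have hbound : ∑' k, μ {ω | k < T n ω} ≤ ENNReal.ofReal (∑' k, g k) := by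
    rw [ENNReal.ofReal_tsum_of_nonneg hg0 hsum_g]
    exact ENNReal.tsum_le_tsum hmub
  have hfinal : ∫ ω, (T n ω : ℝ) ∂μ ≤ (m : ℝ) + Cr := by
    rw [hTint, lintNat μ (T n) (hTmeas n)]
    calc (∑' k, μ {ω | k < T n ω}).toReal
        ≤ (ENNReal.ofReal (∑' k, g k)).toReal :=
          ENNReal.toReal_mono ENNReal.ofReal_ne_top hbound
      _ = ∑' k, g k := ENNReal.toReal_ofReal (tsum_nonneg hg0)
      _ ≤ (m : ℝ) + Cr := hgtotal
  -- final arithmetic:  m + Cr < n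
  have hNceil : (2 + Cr) * b / (b - (d - τ)) < (n : ℝ) := by
    have h1 : ((⌈(2 + Cr) * b / (b - (d - τ))⌉₊ : ℝ) + 1 : ℝ) ≤ (n : ℝ) := by
      have := hn
      push_cast
      exact_mod_cast Nat.cast_le.2 hn
    have h2 : (2 + Cr) * b / (b - (d - τ)) ≤ (⌈(2 + Cr) * b / (b - (d - τ))⌉₊ : ℝ) :=
      Nat.le_ceil _
    linarith
  have hmlt : (m : ℝ) < ((n : ℝ) * (d - τ)) / b + 2 := by
    rw [hmdef]
    push_cast
    have := Nat.ceil_lt_add_one (a := ((n : ℝ) * (d - τ)) / b) (by positivity)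
    linarith
  have harith : ((n : ℝ) * (d - τ)) / b + 2 + Cr < n := by
    have hba : 0 < b - (d - τ) := by linarith
    rw [div_lt_iff₀ hba] at hNceil
    rw [div_add' _ _ _ hb.ne', div_add' _ _ _ hb.ne', div_lt_iff₀ hb]
    nlinarith
  linarith [hfinal, hmlt, harith]


/-- Classical core of the achievability in Theorem 1: for i.i.d. samples from
mutually absolutely continuous distributions `P0, P1` on a finite alphabet,
the SPRT with thresholds `Aₙ = n(D' - τ)` and `Bₙ = n(D - τ)`, where
`D = D(P0∥P1)`, `D' = D(P1∥P0)` and `0 < τ < min(D, D')`, satisfies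
`αₙ ≤ e^{-Aₙ}` and `βₙ ≤ e^{-Bₙ}` for all `n`, while `E₀[Tₙ] < n` and
`E₁[Tₙ] < n` for all sufficiently large `n`. -/
theorem stmt19 {𝒳 : Type*} [Fintype 𝒳] [MeasurableSpace 𝒳] [MeasurableSingletonClass 𝒳]
    (P0 P1 : 𝒳 → ℝ) (hP0pos : ∀ a, 0 < P0 a) (hP1pos : ∀ a, 0 < P1 a)
    (hP0sum : ∑ a, P0 a = 1) (hP1sum : ∑ a, P1 a = 1)
    (D D' : ℝ)
    (hD : D = ∑ a, P0 a * Real.log (P0 a / P1 a))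
    (hD' : D' = ∑ a, P1 a * Real.log (P1 a / P0 a))
    (τ : ℝ) (hτ : 0 < τ) (hτD : τ < min D D')
    {Ω : Type*} [MeasurableSpace Ω] (μ0 μ1 : Measure Ω)
    [IsProbabilityMeasure μ0] [IsProbabilityMeasure μ1]
    (X : ℕ → Ω → 𝒳) (hXmeas : ∀ j, Measurable (X j))
    (hindep0 : iIndepFun X μ0)
    (hindep1 : iIndepFun X μ1)
    (hmarg0 : ∀ j a, (μ0 (X j ⁻¹' {a})).toReal = P0 a)
    (hmarg1 : ∀ j a, (μ1 (X j ⁻¹' {a})).toReal = P1 a)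
    (Z : ℕ → Ω → ℝ)
    (hZ : ∀ j ω, Z j ω = Real.log (P0 (X j ω) / P1 (X j ω)))
    (S : ℕ → Ω → ℝ)
    (hS : ∀ k ω, S k ω = ∑ j ∈ Finset.range k, Z (j + 1) ω)
    (A B : ℕ → ℝ)
    (hA : ∀ n, A n = (n : ℝ) * (D' - τ)) (hB : ∀ n, B n = (n : ℝ) * (D - τ))
    (T : ℕ → Ω → ℕ)
    (hT : ∀ n ω, T n ω = sInf {k : ℕ | 1 ≤ k ∧ (S k ω ≤ -A n ∨ B n ≤ S k ω)}) :
    (∀ n : ℕ,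
      (μ0 {ω | S (T n ω) ω ≤ -A n}).toReal ≤ Real.exp (-A n) ∧
      (μ1 {ω | B n ≤ S (T n ω) ω}).toReal ≤ Real.exp (-B n)) ∧
    ∃ N : ℕ, ∀ n ≥ N,
      (∫ ω, (T n ω : ℝ) ∂μ0) < n ∧ (∫ ω, (T n ω : ℝ) ∂μ1) < n := by
  classical
  have h𝒳 : Nonempty 𝒳 := by
    rcases isEmpty_or_nonempty 𝒳 with h | h
    · exfalso
      rw [Finset.univ_eq_empty, Finset.sum_empty] at hP0sum
      norm_num at hP0sum
    · exact h
  have hτD0 : τ < D := lt_of_lt_of_le hτD (min_le_left _ _)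
  have hτD' : τ < D' := lt_of_lt_of_le hτD (min_le_right _ _)
  have hSform : ∀ k ω, S k ω
      = ∑ j ∈ Finset.range k, Real.log (P0 (X (j + 1) ω) / P1 (X (j + 1) ω)) := by
    intro k ω
    rw [hS]
    exact Finset.sum_congr rfl fun j _ => hZ (j + 1) ω
  have hSform' : ∀ k ω, (fun k ω => -S k ω) k ω
      = ∑ j ∈ Finset.range k, Real.log (P1 (X (j + 1) ω) / P0 (X (j + 1) ω)) := by
    intro k ω
    simp only
    rw [hSform, ← Finset.sum_neg_distrib]
    refine Finset.sum_congr rfl fun j _ => ?_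
    rw [Real.log_div (hP0pos _).ne' (hP1pos _).ne', Real.log_div (hP1pos _).ne' (hP0pos _).ne']
    ring
  have hSmeas : ∀ k, Measurable (S k) := by
    intro k
    have : S k = fun ω => ∑ j ∈ Finset.range k,
        (fun a => Real.log (P0 a / P1 a)) (X (j + 1) ω) := funext fun ω => hSform k ω
    rw [this]
    exact Finset.measurable_sum _ fun j _ =>
      (measurable_of_countable (fun a => Real.log (P0 a / P1 a))).comp (hXmeas (j + 1))
  have hTmeas : ∀ n, Measurable (T n) := by
    intro n
    have : T n = fun ω => sInf {k : ℕ | 1 ≤ k ∧ (S k ω ≤ -A n ∨ B n ≤ S k ω)} :=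
      funext fun ω => hT n ω
    rw [this]
    exact TmeasAux S hSmeas (A n) (B n)
  constructor
  · -- error bounds
    intro n
    by_cases hn : n = 0
    · subst hn
      have hA0 : A 0 = 0 := by rw [hA]; simp
      have hB0 : B 0 = 0 := by rw [hB]; simp
      rw [hA0, hB0]
      have hle : ∀ (μ : Measure Ω) [IsProbabilityMeasure μ] (s : Set Ω),
          (μ s).toReal ≤ 1 := by
        intro μ _ s
        have h1 : μ s ≤ 1 := prob_le_one
        have := ENNReal.toReal_mono ENNReal.one_ne_top h1
        simpa using this
      constructor <;> · simpa using hle _ _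
    · have hn1 : (1 : ℝ) ≤ (n : ℝ) := by exact_mod_cast Nat.one_le_iff_ne_zero.2 hn
      have hApos : 0 < A n := by rw [hA]; nlinarith
      have hBpos : 0 < B n := by rw [hB]; nlinarith
      constructor
      · exact errOne μ0 μ1 P0 P1 hP0pos hP1pos X hXmeas hindep0 hindep1 hmarg0 hmarg1
          S hSform (A n) (B n) hApos (T n) (hT n)
      · have hTeq : ∀ ω, T n ω
            = sInf {k : ℕ | 1 ≤ k ∧ ((fun k ω => -S k ω) k ω ≤ -(B n)
                ∨ A n ≤ (fun k ω => -S k ω) k ω)} := by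
          intro ω
          rw [hT n ω]
          congr 1
          ext k
          simp only [Set.mem_setOf_eq]
          constructor
          · rintro ⟨h1, h2⟩
            refine ⟨h1, ?_⟩
            rcases h2 with h | h
            · exact Or.inr (by linarith)
            · exact Or.inl (by linarith)
          · rintro ⟨h1, h2⟩
            refine ⟨h1, ?_⟩
            rcases h2 with h | h
            · exact Or.inr (by linarith)
            · exact Or.inl (by linarith)
        have hevent : {ω | B n ≤ S (T n ω) ω}
            = {ω | (fun k ω => -S k ω) (T n ω) ω ≤ -(B n)} := by
          ext ω
          simp only [Set.mem_setOf_eq]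
          constructor <;> intro h <;> linarith
        rw [hevent]
        exact errOne μ1 μ0 P1 P0 hP1pos hP0pos X hXmeas hindep1 hindep0 hmarg1 hmarg0
          (fun k ω => -S k ω) hSform' (B n) (A n) hBpos (T n) hTeq
  · -- expected stopping times
    have hTlt0 : ∀ n k ω, k < T n ω → S k ω ≤ (n : ℝ) * (D - τ) := by
      intro n k ω hk
      by_cases hk0 : k = 0
      · subst hk0
        have : S 0 ω = 0 := by rw [hSform]; simp
        rw [this]
        have : (0:ℝ) ≤ (n : ℝ) * (D - τ) := by
          apply mul_nonneg (Nat.cast_nonneg n); linarith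
        linarith
      · have h1k : 1 ≤ k := Nat.one_le_iff_ne_zero.2 hk0
        have hknot : k ∉ {k : ℕ | 1 ≤ k ∧ (S k ω ≤ -A n ∨ B n ≤ S k ω)} := by
          intro hmem
          have h2 := Nat.sInf_le hmem
          rw [← hT n ω] at h2
          omega
        simp only [Set.mem_setOf_eq, h1k, true_and, not_or, not_le] at hknot
        have := hknot.2
        rw [hB] at this
        linarith
    have hTlt1 : ∀ n k ω, k < T n ω → (fun k ω => -S k ω) k ω ≤ (n : ℝ) * (D' - τ) := by
      intro n k ω hk
      simp only
      by_cases hk0 : k = 0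
      · subst hk0
        have : S 0 ω = 0 := by rw [hSform]; simp
        rw [this]
        have : (0:ℝ) ≤ (n : ℝ) * (D' - τ) := by
          apply mul_nonneg (Nat.cast_nonneg n); linarith
        linarith
      · have h1k : 1 ≤ k := Nat.one_le_iff_ne_zero.2 hk0
        have hknot : k ∉ {k : ℕ | 1 ≤ k ∧ (S k ω ≤ -A n ∨ B n ≤ S k ω)} := by
          intro hmem
          have h2 := Nat.sInf_le hmem
          rw [← hT n ω] at h2
          omega
        simp only [Set.mem_setOf_eq, h1k, true_and, not_or, not_le] at hknot
        have := hknot.1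
        rw [hA] at this
        linarith
    obtain ⟨N0, hN0⟩ := expOne μ0 P0 hP0pos hP0sum
      (fun a => Real.log (P0 a / P1 a)) D τ hD hτ hτD0 X hXmeas hindep0 hmarg0
      S hSform T hTmeas hTlt0
    obtain ⟨N1, hN1⟩ := expOne μ1 P1 hP1pos hP1sum
      (fun a => Real.log (P1 a / P0 a)) D' τ hD' hτ hτD' X hXmeas hindep1 hmarg1
      (fun k ω => -S k ω) hSform' T hTmeas hTlt1
    exact ⟨max N0 N1, fun n hn =>
      ⟨hN0 n (le_trans (le_max_left _ _) hn), hN1 n (le_trans (le_max_right _ _) hn)⟩⟩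
end
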